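/- arXiv:1701.05738 — 2 statements merged into one kernel-verified Lean document; each statement's English description precedes it below -/
import Mathlib

section
/- Converse direction of IAR correctness, abstract version: with the same setup, if the maximal priority occurring infinitely often in the sequence (λ_t) is even, then there exists an index n such that σ t n holds for infinitely many t and ρ t n holds for only finitely many t. -/
set_option maxHeartbeats 1000000



/-- Move-to-front update: the indices in `M` are moved to the front positions
(preserving their relative order in `π`), all other indices are shifted right
preserving their relative order. -/
noncomputable def moveToFront {k : ℕ} (π : Equiv.Perm (Fin k)) (M : Finset (Fin k)) :
    Equiv.Perm (Fin k) :=
  let L : List (Fin k) :=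
    ((List.finRange k).map π).filter (fun x => decide (x ∈ M)) ++
      ((List.finRange k).map π).filter (fun x => !decide (x ∈ M))
  have hperm : List.Perm L ((List.finRange k).map π) :=
    List.filter_append_perm _ _
  have hnodup : L.Nodup :=
    hperm.nodup_iff.mpr ((List.nodup_finRange k).map π.injective)
  have hlen : L.length = k := by
    simpa using hperm.length_eq
  Equiv.ofBijective (fun j => L.get (Fin.cast hlen.symm j))
    (Finite.injective_iff_bijective.mp
      (fun a b hab => by
        have := (List.nodup_iff_injective_get.mp hnodup) hab
        simpa using this))

/-- The move-to-front record: `π (t+1)` is obtained from `π t` by moving the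
indices in `M t` to the front. -/
noncomputable def mtfSeq {k : ℕ} (π0 : Equiv.Perm (Fin k)) (M : ℕ → Finset (Fin k)) :
    ℕ → Equiv.Perm (Fin k) :=
  fun t => Nat.rec π0 (fun s p => moveToFront p (M s)) t

/-- The move-to-front record driven by the `F`-visits `ρ`:
at step `t` the indices `i` with `ρ t i` are moved to the front. -/
noncomputable def mtfRecord {k : ℕ} (π0 : Equiv.Perm (Fin k))
    (ρ : ℕ → Fin k → Prop) : ℕ → Equiv.Perm (Fin k) :=
  mtfSeq π0 (fun t => (Set.toFinite {i : Fin k | ρ t i}).toFinset)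

/-- The maximal (1-based) position among the pairs visited at step `t`
(either an `F`-visit `ρ` or an `I`-visit `σ`), or `0` if no pair is visited. -/
noncomputable def maxPos {k : ℕ} (π0 : Equiv.Perm (Fin k))
    (ρ σ : ℕ → Fin k → Prop) (t : ℕ) : ℕ :=
  ((Set.toFinite {i : Fin k | ρ t i ∨ σ t i}).toFinset).sup
    (fun i => (((mtfRecord π0 ρ t).symm i : Fin k) : ℕ) + 1)

open Classical in
/-- The IAR priority emitted at step `t`: `1` if no pair is visited,
`2 * m + 1` if the pair at the maximal visited position `m` is `F`-visited,
and `2 * m` otherwise. -/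
noncomputable def iarPrio {k : ℕ} (π0 : Equiv.Perm (Fin k))
    (ρ σ : ℕ → Fin k → Prop) (t : ℕ) : ℕ :=
  if maxPos π0 ρ σ t = 0 then 1
  else if ∃ i, ρ t i ∧ (((mtfRecord π0 ρ t).symm i : Fin k) : ℕ) + 1 = maxPos π0 ρ σ t
    then 2 * maxPos π0 ρ σ t + 1
    else 2 * maxPos π0 ρ σ t

section Aux
variable {k : ℕ}

lemma mtf_len {k : ℕ} (π : Equiv.Perm (Fin k)) (M : Finset (Fin k)) :
    (((List.finRange k).map π).filter (fun x => decide (x ∈ M)) ++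
      ((List.finRange k).map π).filter (fun x => !decide (x ∈ M))).length = k := by
  simpa using (List.filter_append_perm (fun x => decide (x ∈ M)) ((List.finRange k).map π)).length_eq

lemma moveToFront_apply {k : ℕ} (π : Equiv.Perm (Fin k)) (M : Finset (Fin k)) (j : Fin k) :
    moveToFront π M j =
      (((List.finRange k).map π).filter (fun x => decide (x ∈ M)) ++
        ((List.finRange k).map π).filter (fun x => !decide (x ∈ M))).get
        (Fin.cast (mtf_len π M).symm j) := rfl


lemma moveToFront_apply_of_ge {k : ℕ} (π : Equiv.Perm (Fin k)) (M : Finset (Fin k)) (p : ℕ)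
    (h : ∀ i ∈ M, ((π.symm i : Fin k) : ℕ) < p) (j : Fin k) (hj : p ≤ (j : ℕ)) :
    moveToFront π M j = π j := by
  set l : List (Fin k) := (List.finRange k).map π with hl
  have hllen : l.length = k := by simp [hl]
  have hlget : ∀ (i : ℕ) (hi : i < l.length), l[i] = π ⟨i, by simpa [hllen] using hi⟩ := by
    intro i hi
    simp [hl, List.getElem_finRange]
  -- elements of the dropped part are not in M
  have hdrop : ∀ x ∈ l.drop p, x ∉ M := by
    intro x hx hxM
    obtain ⟨a, ha, hax⟩ := List.mem_iff_getElem.mp hx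
    have ha2 : p + a < l.length := by simp at ha ⊢; omega
    rw [List.getElem_drop] at hax
    rw [hlget _ ha2] at hax
    have : π.symm x = ⟨p + a, by simpa [hllen] using ha2⟩ := by
      rw [← hax]; simp
    have hlt := h x hxM
    rw [this] at hlt
    simp at hlt
  set q : Fin k → Bool := fun x => decide (x ∈ M) with hq
  have hfq : l.filter q = (l.take p).filter q := by
    conv_lhs => rw [← List.take_append_drop p l]
    rw [List.filter_append]
    have : (l.drop p).filter q = [] := by
      rw [List.filter_eq_nil_iff]
      intro x hx
      simpa [hq] using hdrop x hx
    simp [this]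
  have hfnq : l.filter (fun x => !q x) = (l.take p).filter (fun x => !q x) ++ l.drop p := by
    conv_lhs => rw [← List.take_append_drop p l]
    rw [List.filter_append]
    congr 1
    rw [List.filter_eq_self]
    intro x hx
    simpa [hq] using hdrop x hx
  have hpk : p < k := lt_of_le_of_lt hj j.isLt
  have hlenAB : ((l.take p).filter q ++ (l.take p).filter (fun x => !q x)).length = p := by
    rw [(List.filter_append_perm q (l.take p)).length_eq]
    simp [hllen]
    omega
  set L : List (Fin k) := l.filter q ++ l.filter (fun x => !q x) with hL
  have hLlen : L.length = k := by
    rw [hL, (List.filter_append_perm q l).length_eq, hllen]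
  have hLdrop : L.drop p = l.drop p := by
    rw [hL, hfq, hfnq, ← List.append_assoc]
    exact List.drop_left' hlenAB
  have key : ∀ (i : ℕ) (hi : i < k), p ≤ i → L[i]'(by rw [hLlen]; exact hi) = l[i]'(by rw [hllen]; exact hi) := by
    intro i hi hpi
    have h1 : L[i]'(by rw [hLlen]; exact hi) = (L.drop p)[i - p]'(by simp [hLlen]; omega) := by
      rw [List.getElem_drop]
      congr 1
      omega
    have h2 : l[i]'(by rw [hllen]; exact hi) = (l.drop p)[i - p]'(by simp [hllen]; omega) := by
      rw [List.getElem_drop]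
      congr 1
      omega
    rw [h1, h2]
    exact List.getElem_of_eq hLdrop _
  rw [moveToFront_apply, List.get_eq_getElem]
  have := key (j : ℕ) j.isLt hj
  rw [hlget _ (by rw [hllen]; exact j.isLt)] at this
  simpa using this

lemma mtfRecord_succ (π0 : Equiv.Perm (Fin k)) (ρ : ℕ → Fin k → Prop) (t : ℕ) :
    mtfRecord π0 ρ (t + 1) =
      moveToFront (mtfRecord π0 ρ t) ((Set.toFinite {i : Fin k | ρ t i}).toFinset) := rfl

lemma maxPos_le_k (π0 : Equiv.Perm (Fin k)) (ρ σ : ℕ → Fin k → Prop) (t : ℕ) :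
    maxPos π0 ρ σ t ≤ k := by
  apply Finset.sup_le
  intro i _
  exact ((mtfRecord π0 ρ t).symm i).isLt

lemma le_maxPos (π0 : Equiv.Perm (Fin k)) (ρ σ : ℕ → Fin k → Prop) (t : ℕ) (i : Fin k)
    (hi : ρ t i ∨ σ t i) :
    (((mtfRecord π0 ρ t).symm i : Fin k) : ℕ) + 1 ≤ maxPos π0 ρ σ t := by
  unfold maxPos
  exact Finset.le_sup (f := fun i : Fin k => (((mtfRecord π0 ρ t).symm i : Fin k) : ℕ) + 1)
    (by simp only [Set.Finite.mem_toFinset, Set.mem_setOf_eq]; exact hi)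

lemma iarPrio_pos (π0 : Equiv.Perm (Fin k)) (ρ σ : ℕ → Fin k → Prop) (t : ℕ) :
    1 ≤ iarPrio π0 ρ σ t := by
  unfold iarPrio
  split
  · exact le_refl 1
  · split <;> omega

lemma iarPrio_le (π0 : Equiv.Perm (Fin k)) (ρ σ : ℕ → Fin k → Prop) (t : ℕ) :
    iarPrio π0 ρ σ t ≤ 2 * k + 1 := by
  have := maxPos_le_k π0 ρ σ t
  unfold iarPrio
  split
  · omega
  · split <;> omega


end Aux

/-- Correctness of the IAR priority scheme (abstract version), converse
direction: if the maximal priority occurring infinitely often in the priority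
sequence is even, then some pair `n` has infinitely many `I`-visits and only
finitely many `F`-visits. -/
theorem iar_priority_converse {k : ℕ} (hk : 0 < k)
    (π0 : Equiv.Perm (Fin k)) (ρ σ : ℕ → Fin k → Prop)
    (h : Even (sSup {p : ℕ | Set.Infinite {t : ℕ | iarPrio π0 ρ σ t = p}})) :
    ∃ n : Fin k, Set.Infinite {t : ℕ | σ t n} ∧ Set.Finite {t : ℕ | ρ t n} := by
  classical
  set S : Set ℕ := {p : ℕ | Set.Infinite {t : ℕ | iarPrio π0 ρ σ t = p}} with hS
  -- S is nonempty
  have hSne : S.Nonempty := by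
    obtain ⟨b, hb⟩ := Finite.exists_infinite_fiber
      (fun t : ℕ => (⟨iarPrio π0 ρ σ t, by have := iarPrio_le π0 ρ σ t; omega⟩ : Fin (2 * k + 2)))
    refine ⟨(b : ℕ), ?_⟩
    rw [hS, Set.mem_setOf_eq, ← Set.infinite_coe_iff]
    convert hb using 2
    ext t
    simp only [Set.mem_setOf_eq, Set.mem_preimage, Set.mem_singleton_iff, Fin.ext_iff]
  -- S is bounded above
  have hbdd : BddAbove S := by
    refine ⟨2 * k + 1, fun p hp => ?_⟩
    obtain ⟨t, ht⟩ := hp.nonempty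
    rw [Set.mem_setOf_eq] at ht
    rw [← ht]
    exact iarPrio_le π0 ρ σ t
  set P := sSup S with hP
  have hPS : P ∈ S := Nat.sSup_mem hSne hbdd
  have hPex : ∃ t, iarPrio π0 ρ σ t = P := by
    obtain ⟨t, ht⟩ := hPS.nonempty
    exact ⟨t, ht⟩
  have hP1 : 1 ≤ P := by
    obtain ⟨t, ht⟩ := hPex
    rw [← ht]; exact iarPrio_pos π0 ρ σ t
  obtain ⟨m, hm⟩ := h
  have hm2 : P = 2 * m := by omega
  have hm1 : 1 ≤ m := by omega
  -- m ≤ k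
  have hmk : m ≤ k := by
    obtain ⟨t, ht⟩ := hPex
    rw [hm2] at ht
    have hmax := maxPos_le_k π0 ρ σ t
    unfold iarPrio at ht
    split at ht
    · omega
    · split at ht <;> omega
  -- eventually priorities are ≤ P
  have hbig : {t : ℕ | P < iarPrio π0 ρ σ t}.Finite := by
    have hsub : {t : ℕ | P < iarPrio π0 ρ σ t} ⊆
        ⋃ p ∈ Finset.Icc (P + 1) (2 * k + 1), {t : ℕ | iarPrio π0 ρ σ t = p} := by
      intro t ht
      rw [Set.mem_setOf_eq] at ht
      have := iarPrio_le π0 ρ σ t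
      refine Set.mem_biUnion (s := (Finset.Icc (P + 1) (2 * k + 1) : Set ℕ)) ?_ rfl
      simp only [Finset.coe_Icc, Set.mem_Icc]
      omega
    refine Set.Finite.subset (Set.Finite.biUnion (Finset.Icc (P + 1) (2 * k + 1)).finite_toSet
      fun p hp => ?_) hsub
    by_contra hinf
    have : p ∈ S := hinf
    have := le_csSup hbdd this
    simp only [Finset.mem_coe, Finset.mem_Icc] at hp
    omega
  obtain ⟨T1, hT1⟩ := hbig.bddAbove
  set T0 := T1 + 1 with hT0def
  have hT0 : ∀ t, T0 ≤ t → iarPrio π0 ρ σ t ≤ P := by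
    intro t ht
    by_contra hc
    push_neg at hc
    have := hT1 hc
    omega
  -- after T0, every ρ-visited index is at position + 1 < m
  have hρpos : ∀ t, T0 ≤ t → ∀ i : Fin k, ρ t i →
      (((mtfRecord π0 ρ t).symm i : Fin k) : ℕ) + 1 < m := by
    intro t ht i hρi
    have hle := le_maxPos π0 ρ σ t i (Or.inl hρi)
    have hne : ¬ maxPos π0 ρ σ t = 0 := by omega
    have hprio := hT0 t ht
    rw [hm2] at hprio
    unfold iarPrio at hprio
    rw [if_neg hne] at hprio
    by_cases hex : ∃ j : Fin k, ρ t j ∧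
        (((mtfRecord π0 ρ t).symm j : Fin k) : ℕ) + 1 = maxPos π0 ρ σ t
    · rw [if_pos hex] at hprio
      omega
    · rw [if_neg hex] at hprio
      have hne2 : (((mtfRecord π0 ρ t).symm i : Fin k) : ℕ) + 1 ≠ maxPos π0 ρ σ t :=
        fun hc => hex ⟨i, hρi, hc⟩
      omega
  -- stability of positions ≥ m - 1 after T0
  have hstab : ∀ t, T0 ≤ t → ∀ j : Fin k, m - 1 ≤ (j : ℕ) →
      mtfRecord π0 ρ t j = mtfRecord π0 ρ T0 j := by
    intro t ht
    induction t, ht using Nat.le_induction with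
    | base => intro j _; rfl
    | succ t ht IH =>
      intro j hj
      rw [mtfRecord_succ]
      rw [moveToFront_apply_of_ge _ _ (m - 1) ?_ j hj]
      · exact IH j hj
      · intro i hi
        rw [Set.Finite.mem_toFinset, Set.mem_setOf_eq] at hi
        have := hρpos t ht i hi
        omega
  have hmk' : m - 1 < k := by omega
  set n : Fin k := mtfRecord π0 ρ T0 ⟨m - 1, hmk'⟩ with hn
  have hnpos : ∀ t, T0 ≤ t → mtfRecord π0 ρ t ⟨m - 1, hmk'⟩ = n := by
    intro t ht
    exact hstab t ht ⟨m - 1, hmk'⟩ (le_refl _)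
  refine ⟨n, ?_, ?_⟩
  · -- infinitely many σ-visits
    have hsub : {t : ℕ | iarPrio π0 ρ σ t = P} \ Set.Iio T0 ⊆ {t : ℕ | σ t n} := by
      intro t ⟨hp, htT0⟩
      simp only [Set.mem_Iio, not_lt] at htT0
      rw [Set.mem_setOf_eq, hm2] at hp
      have hne : ¬ maxPos π0 ρ σ t = 0 := by
        intro hc
        unfold iarPrio at hp
        rw [if_pos hc] at hp
        omega
      have hmax : maxPos π0 ρ σ t = m := by
        unfold iarPrio at hp
        rw [if_neg hne] at hp
        split at hp <;> omega
      -- the sup is attained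
      have hsne : ((Set.toFinite {i : Fin k | ρ t i ∨ σ t i}).toFinset).Nonempty := by
        rw [Finset.nonempty_iff_ne_empty]
        intro hc
        have : maxPos π0 ρ σ t = 0 := by
          unfold maxPos
          rw [hc]
          rfl
        omega
      obtain ⟨i, hi, hsup⟩ := Finset.exists_mem_eq_sup _ hsne
        (fun i : Fin k => (((mtfRecord π0 ρ t).symm i : Fin k) : ℕ) + 1)
      rw [Set.Finite.mem_toFinset, Set.mem_setOf_eq] at hi
      have hieq : (((mtfRecord π0 ρ t).symm i : Fin k) : ℕ) + 1 = m := by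
        rw [← hsup]; exact hmax.symm ▸ rfl
      rcases hi with hρi | hσi
      · have := hρpos t htT0 i hρi
        omega
      · -- i is at position m - 1, so i = n
        have hieq2 : (mtfRecord π0 ρ t).symm i = ⟨m - 1, hmk'⟩ := by
          apply Fin.ext
          simp only
          omega
        have : i = mtfRecord π0 ρ t ⟨m - 1, hmk'⟩ := by
          rw [← hieq2, Equiv.apply_symm_apply]
        rw [this, hnpos t htT0] at hσi
        exact hσi
    apply Set.Infinite.mono hsub
    exact Set.Infinite.diff hPS (Set.finite_Iio T0)
  · -- finitely many ρ-visits
    apply Set.Finite.subset (Set.finite_Iio T0)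
    intro t ht
    rw [Set.mem_setOf_eq] at ht
    rw [Set.mem_Iio]
    by_contra hc
    push_neg at hc
    have hlt := hρpos t hc n ht
    have : (mtfRecord π0 ρ t).symm n = ⟨m - 1, hmk'⟩ := by
      rw [Equiv.symm_apply_eq, hnpos t hc]
    rw [this] at hlt
    simp only at hlt
    omega
end

section
/- If no required set is visited infinitely often (Inf(ρ) ∩ I_i = ∅ for all i), then every priority emitted infinitely often by the IAR priority function is odd, and hence the IAR run is parity-rejecting — matching that the Rabin run is rejecting. -/
/-- If no required set is visited infinitely often (for every pair `n` the
`I`-visits `σ · n` occur only finitely often), then every priority emitted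
infinitely often by the IAR priority function is odd, so the IAR run is
parity-rejecting. -/
theorem iar_rejecting_of_no_infinite_required {k : ℕ}
    (π0 : Equiv.Perm (Fin k)) (ρ σ : ℕ → Fin k → Prop)
    (h : ∀ n : Fin k, Set.Finite {t : ℕ | σ t n}) :
    ∀ p : ℕ, Set.Infinite {t : ℕ | iarPrio π0 ρ σ t = p} → Odd p := by
  intro p hp
  by_contra hodd
  rw [Nat.not_odd_iff_even] at hodd
  have hsub : {t : ℕ | iarPrio π0 ρ σ t = p} ⊆ ⋃ n : Fin k, {t : ℕ | σ t n} := by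
    intro t ht
    simp only [Set.mem_setOf_eq] at ht
    unfold iarPrio at ht
    split_ifs at ht with h0 h1
    · rw [← ht] at hodd; exact absurd hodd (by decide)
    · rw [← ht] at hodd
      exact absurd hodd (by simp [Nat.even_add_one, Nat.even_mul])
    · -- even case: p = 2 * maxPos, maxPos ≠ 0, no ρ-witness at max
      set s := (Set.toFinite {i : Fin k | ρ t i ∨ σ t i}).toFinset with hs
      have hne : s.Nonempty := by
        by_contra hne
        rw [Finset.not_nonempty_iff_eq_empty] at hne
        apply h0
        unfold maxPos
        rw [← hs, hne, Finset.sup_empty]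
        rfl
      obtain ⟨i, hi, hsup⟩ :=
        Finset.exists_mem_eq_sup s hne
          (fun i => (((mtfRecord π0 ρ t).symm i : Fin k) : ℕ) + 1)
      have hmax : (((mtfRecord π0 ρ t).symm i : Fin k) : ℕ) + 1 = maxPos π0 ρ σ t := by
        unfold maxPos; rw [← hs, hsup]
      have hiv : ρ t i ∨ σ t i := by
        have := hi
        rw [hs, Set.Finite.mem_toFinset] at this
        exact this
      rcases hiv with hρ | hσ
      · exact absurd ⟨i, hρ, hmax⟩ h1
      · exact Set.mem_iUnion.mpr ⟨i, hσ⟩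
  exact absurd (hp.mono hsub) (Set.not_infinite.mpr (Set.finite_iUnion fun n => h n))
end
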